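/- arXiv:2112.01744 — 4 statements merged into one kernel-verified Lean document; each statement's English description precedes it below -/
import Mathlib

section
/- Let f₀ : ℝ² × ℝ² → ℝ be continuously differentiable on (closed unit disk) × ℝ² and satisfy the specular boundary condition f₀(x,v) = f₀(x, R_x v) for all x with |x| = 1 and all v ∈ ℝ². If for every (x,v) ∈ γ₋ one has ∇_x f₀(x,v) = ∇_x f₀(x, R_x v) R_x − 2 ∇_v f₀(x, R_x v) A_{v,x}, then the same identity holds for every (x,v) ∈ γ₊. -/
noncomputable section

open Matrix Real Set

/-- The Euclidean plane ℝ². -/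
abbrev E : Type := EuclideanSpace ℝ (Fin 2)

/-- Dot product on ℝ². -/
def dot (a b : E) : ℝ := a 0 * b 0 + a 1 * b 1

/-- Build a vector of ℝ² from its components. -/
def toE (f : Fin 2 → ℝ) : E := (WithLp.equiv 2 (Fin 2 → ℝ)).symm f

/-- Tensor (outer) product a⊗b, (a⊗b)_{ij} = aᵢ bⱼ. -/
def outer (a b : E) : Matrix (Fin 2) (Fin 2) ℝ := Matrix.of fun i j => a i * b j

/-- Matrix acting on a column vector. -/
def mulV (M : Matrix (Fin 2) (Fin 2) ℝ) (v : E) : E := toE fun i => M i 0 * v 0 + M i 1 * v 1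

/-- Row vector multiplied by a matrix on the right. -/
def vMulM (w : E) (M : Matrix (Fin 2) (Fin 2) ℝ) : E := toE fun j => w 0 * M 0 j + w 1 * M 1 j

/-- Specular reflection matrix R_n = I - 2 n⊗n. -/
def Rmat (n : E) : Matrix (Fin 2) (Fin 2) ℝ := 1 - (2 : ℝ) • outer n n

/-- The matrix A_{v,n} = ((v·n) I + n⊗v)(I - (v⊗n)/(v·n)). -/
def Amat (v n : E) : Matrix (Fin 2) (Fin 2) ℝ :=
  (dot v n • (1 : Matrix (Fin 2) (Fin 2) ℝ) + outer n v) *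
    (1 - (dot v n)⁻¹ • outer v n)

/-- Counterclockwise rotation by π/2. -/
def Qmat : Matrix (Fin 2) (Fin 2) ℝ := !![0, -1; 1, 0]

/-- Backward exit time from the closed unit disk. -/
def tb (x v : E) : ℝ := sSup {s : ℝ | 0 ≤ s ∧ ‖x - s • v‖ ≤ 1}

/-- Backward exit point from the closed unit disk. -/
def xb (x v : E) : E := x - tb x v • v

/-- The i-th column of a 2×2 matrix, as a vector of ℝ². -/
def colE (M : Matrix (Fin 2) (Fin 2) ℝ) (i : Fin 2) : E := toE fun k => M k i

/-- A 2×2 matrix as a continuous linear map ℝ² → ℝ². -/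
def toCLM (M : Matrix (Fin 2) (Fin 2) ℝ) : E →L[ℝ] E :=
  LinearMap.toContinuousLinearMap (Matrix.toEuclideanLin M)

/-- The phase space (closed unit disk) × ℝ². -/
def S : Set (E × E) := {p : E × E | ‖p.1‖ ≤ 1}

/-- The gradient in x of f₀ within (closed unit disk) × ℝ², as a row vector. -/
def gradx (f : E × E → ℝ) (x v : E) : E :=
  toE fun i => fderivWithin ℝ f S (x, v) (EuclideanSpace.single i 1, 0)

/-- The gradient in v of f₀ within (closed unit disk) × ℝ², as a row vector. -/
def gradv (f : E × E → ℝ) (x v : E) : E :=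
  toE fun i => fderivWithin ℝ f S (x, v) (0, EuclideanSpace.single i 1)

/-! ### Auxiliary lemmas -/

lemma sq_norm_one {x : E} (h : ‖x‖ = 1) : x 0 ^ 2 + x 1 ^ 2 = 1 := by
  have h2 : ‖x‖ ^ 2 = 1 := by rw [h]; norm_num
  rw [EuclideanSpace.norm_eq, Real.sq_sqrt (by positivity)] at h2
  simpa [Fin.sum_univ_two, Real.norm_eq_abs, sq_abs] using h2

lemma toCLM_apply (M : Matrix (Fin 2) (Fin 2) ℝ) (u : E) : toCLM M u = mulV M u := by
  ext i
  simp [toCLM, Matrix.toEuclideanLin, Matrix.mulVec, dotProduct, Fin.sum_univ_two, mulV, toE]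

lemma mulV_R (x v : E) : mulV (Rmat x) v = v - (2 * dot v x) • x := by
  ext i
  fin_cases i <;>
    simp [mulV, toE, Rmat, outer, dot, Matrix.one_apply, PiLp.sub_apply, PiLp.smul_apply,
      Matrix.sub_apply, Matrix.smul_apply, smul_eq_mul] <;> ring

lemma dot_mulV_R (x v : E) (hx : x 0 ^ 2 + x 1 ^ 2 = 1) :
    dot (mulV (Rmat x) v) x = -dot v x := by
  simp only [mulV_R, dot, PiLp.sub_apply, PiLp.smul_apply, smul_eq_mul]
  linear_combination (-2 * (v 0 * x 0 + v 1 * x 1)) * hx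

lemma dot_mulV_R_self (x v : E) (hx : x 0 ^ 2 + x 1 ^ 2 = 1) :
    dot (mulV (Rmat x) v) (mulV (Rmat x) v) = dot v v := by
  simp only [mulV_R, dot, PiLp.sub_apply, PiLp.smul_apply, smul_eq_mul]
  linear_combination (4 * (v 0 * x 0 + v 1 * x 1) ^ 2) * hx

lemma mulV_R_invol (x v : E) (hx : x 0 ^ 2 + x 1 ^ 2 = 1) :
    mulV (Rmat x) (mulV (Rmat x) v) = v := by
  ext i
  fin_cases i
  · simp only [mulV_R, dot, PiLp.sub_apply, PiLp.smul_apply, smul_eq_mul, Fin.mk_zero, Fin.mk_one]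
    linear_combination (4 * (x 0) * (v 0 * x 0 + v 1 * x 1)) * hx
  · simp only [mulV_R, dot, PiLp.sub_apply, PiLp.smul_apply, smul_eq_mul, Fin.mk_zero, Fin.mk_one]
    linear_combination (4 * (x 1) * (v 0 * x 0 + v 1 * x 1)) * hx

lemma Rmat_sq (x : E) (hx : x 0 ^ 2 + x 1 ^ 2 = 1) : Rmat x * Rmat x = 1 := by
  ext i j
  fin_cases i <;> fin_cases j
  · simp only [Rmat, Matrix.mul_apply, Fin.sum_univ_two, outer, Matrix.of_apply,
      Matrix.one_apply, Matrix.smul_apply, Matrix.sub_apply, smul_eq_mul,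
      Fin.mk_zero, Fin.mk_one]
    norm_num
    linear_combination (4 * x 0 ^ 2) * hx
  · simp only [Rmat, Matrix.mul_apply, Fin.sum_univ_two, outer, Matrix.of_apply,
      Matrix.one_apply, Matrix.smul_apply, Matrix.sub_apply, smul_eq_mul,
      Fin.mk_zero, Fin.mk_one]
    norm_num
    linear_combination (4 * x 0 * x 1) * hx
  · simp only [Rmat, Matrix.mul_apply, Fin.sum_univ_two, outer, Matrix.of_apply,
      Matrix.one_apply, Matrix.smul_apply, Matrix.sub_apply, smul_eq_mul,
      Fin.mk_zero, Fin.mk_one]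
    norm_num
    linear_combination (4 * x 0 * x 1) * hx
  · simp only [Rmat, Matrix.mul_apply, Fin.sum_univ_two, outer, Matrix.of_apply,
      Matrix.one_apply, Matrix.smul_apply, Matrix.sub_apply, smul_eq_mul,
      Fin.mk_zero, Fin.mk_one]
    norm_num
    linear_combination (4 * x 1 ^ 2) * hx

lemma Amat_eq (v n : E) (h : dot v n ≠ 0) :
    Amat v n = dot v n • (1 : Matrix (Fin 2) (Fin 2) ℝ) + outer n v - outer v n
      - ((dot v n)⁻¹ * dot v v) • outer n n := by
  have h' : v 0 * n 0 + v 1 * n 1 ≠ 0 := by simpa [dot] using h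
  have h'' : n 1 * v 1 + v 0 * n 0 ≠ 0 := by intro hc; exact h' (by linarith)
  ext i j
  fin_cases i <;> fin_cases j <;>
    · simp only [Amat, Matrix.mul_apply, Fin.sum_univ_two, outer, Matrix.of_apply,
        Matrix.one_apply, Matrix.smul_apply, Matrix.sub_apply, Matrix.add_apply, smul_eq_mul,
        dot, Fin.mk_zero, Fin.mk_one]
      norm_num
      field_simp
      ring_nf <;> (field_simp; ring)

lemma key_matrix (x v : E) (hx : x 0 ^ 2 + x 1 ^ 2 = 1) (q : ℝ) :
    Rmat x * ((-(dot v x)) • (1 : Matrix (Fin 2) (Fin 2) ℝ) + outer x v - outer v x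
        + q • outer x x) * Rmat x
      = -((dot v x) • (1 : Matrix (Fin 2) (Fin 2) ℝ) + outer x v - outer v x
        - q • outer x x) := by
  ext i j
  fin_cases i <;> fin_cases j
  · simp only [Rmat, Matrix.mul_apply, Fin.sum_univ_two, outer, Matrix.of_apply, dot,
      Matrix.one_apply, Matrix.smul_apply, Matrix.sub_apply, Matrix.add_apply, Matrix.neg_apply,
      smul_eq_mul, Fin.mk_zero, Fin.mk_one]
    norm_num
    linear_combination (-4*(x 0)^2*(x 1)*(v 1) + 4*(x 0)^2*(x 1)^2*q + -4*(x 0)^3*(v 0) + 4*(x 0)^4*q) * hx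
  · simp only [Rmat, Matrix.mul_apply, Fin.sum_univ_two, outer, Matrix.of_apply, dot,
      Matrix.one_apply, Matrix.smul_apply, Matrix.sub_apply, Matrix.add_apply, Matrix.neg_apply,
      smul_eq_mul, Fin.mk_zero, Fin.mk_one]
    norm_num
    linear_combination (2*(x 1)*(v 0) + -2*(x 0)*(v 1) + -4*(x 0)*(x 1)^2*(v 1) + 4*(x 0)*(x 1)^3*q + -4*(x 0)^2*(x 1)*(v 0) + 4*(x 0)^3*(x 1)*q) * hx
  · simp only [Rmat, Matrix.mul_apply, Fin.sum_univ_two, outer, Matrix.of_apply, dot,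
      Matrix.one_apply, Matrix.smul_apply, Matrix.sub_apply, Matrix.add_apply, Matrix.neg_apply,
      smul_eq_mul, Fin.mk_zero, Fin.mk_one]
    norm_num
    linear_combination (-2*(x 1)*(v 0) + 2*(x 0)*(v 1) + -4*(x 0)*(x 1)^2*(v 1) + 4*(x 0)*(x 1)^3*q + -4*(x 0)^2*(x 1)*(v 0) + 4*(x 0)^3*(x 1)*q) * hx
  · simp only [Rmat, Matrix.mul_apply, Fin.sum_univ_two, outer, Matrix.of_apply, dot,
      Matrix.one_apply, Matrix.smul_apply, Matrix.sub_apply, Matrix.add_apply, Matrix.neg_apply,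
      smul_eq_mul, Fin.mk_zero, Fin.mk_one]
    norm_num
    linear_combination (-4*(x 1)^3*(v 1) + 4*(x 1)^4*q + -4*(x 0)*(x 1)^2*(v 0) + 4*(x 0)^2*(x 1)^2*q) * hx

lemma Amat_mulV_R (x v : E) (hx : x 0 ^ 2 + x 1 ^ 2 = 1) (hd : dot v x ≠ 0) :
    Amat (mulV (Rmat x) v) x
      = (-(dot v x)) • (1 : Matrix (Fin 2) (Fin 2) ℝ) + outer x v - outer v x
        + ((dot v x)⁻¹ * dot v v) • outer x x := by
  have hd' : v 0 * x 0 + v 1 * x 1 ≠ 0 := by simpa [dot] using hd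
  have hdw0 : dot (mulV (Rmat x) v) x ≠ 0 := by
    rw [dot_mulV_R x v hx]; exact neg_ne_zero.mpr hd
  rw [Amat_eq _ _ hdw0, dot_mulV_R x v hx, dot_mulV_R_self x v hx, mulV_R, inv_neg]
  have hd2 : x 1 * v 1 + v 0 * x 0 ≠ 0 := fun hc => hd' (by linarith)
  have hd3 : v 1 * x 1 + v 0 * x 0 ≠ 0 := fun hc => hd' (by linarith)
  have hd4 : x 0 * v 0 + v 1 * x 1 ≠ 0 := fun hc => hd' (by linarith)
  ext i j
  fin_cases i <;> fin_cases j <;>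
  · simp only [outer, Matrix.of_apply, dot, PiLp.sub_apply, PiLp.smul_apply, smul_eq_mul,
      Matrix.one_apply, Matrix.smul_apply, Matrix.sub_apply, Matrix.add_apply,
      Fin.mk_zero, Fin.mk_one]
    field_simp
    ring

/-! ### vMulM algebra -/

lemma vMulM_vMulM (a : E) (M N : Matrix (Fin 2) (Fin 2) ℝ) :
    vMulM (vMulM a M) N = vMulM a (M * N) := by
  ext j
  fin_cases j <;>
    simp [vMulM, toE, Matrix.mul_apply, Fin.sum_univ_two] <;> ring

lemma vMulM_one (a : E) : vMulM a 1 = a := by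
  ext j
  fin_cases j <;> simp [vMulM, toE, Matrix.one_apply]

lemma vMulM_sub (a b : E) (M : Matrix (Fin 2) (Fin 2) ℝ) :
    vMulM (a - b) M = vMulM a M - vMulM b M := by
  ext j
  simp only [vMulM, toE, WithLp.equiv_symm_apply, PiLp.toLp_apply, PiLp.sub_apply]
  ring

lemma vMulM_smul (c : ℝ) (a : E) (M : Matrix (Fin 2) (Fin 2) ℝ) :
    vMulM (c • a) M = c • vMulM a M := by
  ext j
  simp only [vMulM, toE, WithLp.equiv_symm_apply, PiLp.toLp_apply, PiLp.smul_apply, smul_eq_mul]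
  ring

lemma vMulM_neg (a : E) (M : Matrix (Fin 2) (Fin 2) ℝ) :
    vMulM a (-M) = -vMulM a M := by
  ext j
  simp only [vMulM, toE, WithLp.equiv_symm_apply, PiLp.toLp_apply, PiLp.neg_apply, Matrix.neg_apply]
  ring

/-! ### The analytic reflection identity for the v-gradient -/

lemma gradv_reflect (f₀ : E × E → ℝ) (hf : ContDiffOn ℝ 1 f₀ S)
    (hbc : ∀ x v : E, ‖x‖ = 1 → f₀ (x, v) = f₀ (x, mulV (Rmat x) v))
    (x v : E) (hx1 : ‖x‖ = 1) :
    gradv f₀ x v = vMulM (gradv f₀ x (mulV (Rmat x) v)) (Rmat x) := by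
  set w := mulV (Rmat x) v with hw
  have hmem : ∀ u : E, (x, u) ∈ S := fun u => le_of_eq hx1
  have hdiff : DifferentiableOn ℝ f₀ S := hf.differentiableOn one_ne_zero
  set D := fderivWithin ℝ f₀ S (x, v) with hD
  set D' := fderivWithin ℝ f₀ S (x, w) with hD'
  have hDv : HasFDerivWithinAt f₀ D S (x, v) := (hdiff _ (hmem v)).hasFDerivWithinAt
  have hDw : HasFDerivWithinAt f₀ D' S (x, w) := (hdiff _ (hmem w)).hasFDerivWithinAt
  have hι : ∀ u : E, HasFDerivAt (fun z : E => ((x, z) : E × E))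
      (ContinuousLinearMap.inr ℝ E E) u := fun u =>
    (hasFDerivAt_const x u).prodMk (hasFDerivAt_id u)
  have hg : HasFDerivAt (fun u : E => f₀ (x, u)) (D.comp (ContinuousLinearMap.inr ℝ E E)) v := by
    have := hDv.comp (t := S) v ((hι v).hasFDerivWithinAt (s := Set.univ)) (fun u _ => hmem u)
    rw [hasFDerivWithinAt_univ] at this
    exact this
  have hg' : HasFDerivAt (fun u : E => f₀ (x, u)) (D'.comp (ContinuousLinearMap.inr ℝ E E)) w := by
    have := hDw.comp (t := S) w ((hι w).hasFDerivWithinAt (s := Set.univ)) (fun u _ => hmem u)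
    rw [hasFDerivWithinAt_univ] at this
    exact this
  set L := toCLM (Rmat x) with hL
  have hLv : L v = w := toCLM_apply _ _
  have hgL : HasFDerivAt ((fun u : E => f₀ (x, u)) ∘ L)
      ((D'.comp (ContinuousLinearMap.inr ℝ E E)).comp L) v := by
    apply HasFDerivAt.comp v ?_ L.hasFDerivAt
    rw [hLv]
    exact hg'
  have heq : (fun u : E => f₀ (x, u)) = (fun u : E => f₀ (x, u)) ∘ L := by
    funext u
    have hLu : L u = mulV (Rmat x) u := toCLM_apply _ _
    rw [Function.comp_apply, hLu]
    exact hbc x u hx1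
  have huniq : D.comp (ContinuousLinearMap.inr ℝ E E)
      = (D'.comp (ContinuousLinearMap.inr ℝ E E)).comp L := by
    apply hg.unique
    rw [heq]
    exact hgL
  ext j
  have h2 : D ((0 : E), EuclideanSpace.single j (1:ℝ))
      = D' ((0 : E), L (EuclideanSpace.single j (1:ℝ))) := by
    have := congrArg (fun T : E →L[ℝ] ℝ => T (EuclideanSpace.single j (1:ℝ))) huniq
    simpa using this
  have hcol : L (EuclideanSpace.single j (1:ℝ))
      = (Rmat x 0 j) • EuclideanSpace.single (0 : Fin 2) (1:ℝ)
        + (Rmat x 1 j) • EuclideanSpace.single (1 : Fin 2) (1:ℝ) := by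
    rw [toCLM_apply]
    ext k
    fin_cases k <;> fin_cases j <;>
      simp [mulV, toE, EuclideanSpace.single_apply, PiLp.add_apply, PiLp.smul_apply]
  have h3 : (((0 : E), (Rmat x 0 j) • EuclideanSpace.single (0 : Fin 2) (1:ℝ)
        + (Rmat x 1 j) • EuclideanSpace.single (1 : Fin 2) (1:ℝ)) : E × E)
      = (Rmat x 0 j) • (((0 : E), EuclideanSpace.single (0 : Fin 2) (1:ℝ)) : E × E)
        + (Rmat x 1 j) • (((0 : E), EuclideanSpace.single (1 : Fin 2) (1:ℝ)) : E × E) := by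
    simp [Prod.ext_iff]
  show D ((0 : E), EuclideanSpace.single j (1:ℝ))
      = D' ((0 : E), EuclideanSpace.single (0 : Fin 2) (1:ℝ)) * Rmat x 0 j
        + D' ((0 : E), EuclideanSpace.single (1 : Fin 2) (1:ℝ)) * Rmat x 1 j
  rw [h2, hcol, h3, map_add, _root_.map_smul, _root_.map_smul, smul_eq_mul, smul_eq_mul]
  ring

/-- the C¹ compatibility condition on γ₋ implies the same identity on γ₊. -/
theorem stmt5 (f₀ : E × E → ℝ)
    (hf : ContDiffOn ℝ 1 f₀ S)
    (hbc : ∀ x v : E, ‖x‖ = 1 → f₀ (x, v) = f₀ (x, mulV (Rmat x) v))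
    (hcomp : ∀ x v : E, ‖x‖ = 1 → dot v x < 0 →
      gradx f₀ x v =
        vMulM (gradx f₀ x (mulV (Rmat x) v)) (Rmat x) -
          (2 : ℝ) • vMulM (gradv f₀ x (mulV (Rmat x) v)) (Amat v x)) :
    ∀ x v : E, ‖x‖ = 1 → 0 < dot v x →
      gradx f₀ x v =
        vMulM (gradx f₀ x (mulV (Rmat x) v)) (Rmat x) -
          (2 : ℝ) • vMulM (gradv f₀ x (mulV (Rmat x) v)) (Amat v x) := by
  intro x v hx1 hpos
  have hx := sq_norm_one hx1
  have hd : dot v x ≠ 0 := ne_of_gt hpos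
  have hdw : dot (mulV (Rmat x) v) x < 0 := by
    rw [dot_mulV_R x v hx]; linarith
  have h1 := hcomp x (mulV (Rmat x) v) hx1 hdw
  rw [mulV_R_invol x v hx] at h1
  have h2 := gradv_reflect f₀ hf hbc x v hx1
  have hAw := Amat_mulV_R x v hx hd
  have hAv := Amat_eq v x hd
  have hkey : Rmat x * Amat (mulV (Rmat x) v) x * Rmat x = -(Amat v x) := by
    rw [hAw, key_matrix x v hx _, hAv]
  rw [h1, vMulM_sub, vMulM_smul, vMulM_vMulM, vMulM_vMulM, Rmat_sq x hx, vMulM_one, h2,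
    vMulM_vMulM, ← mul_assoc, hkey, vMulM_neg, smul_neg, sub_neg_eq_add, add_sub_cancel_right]
end
end

section
/- Let x lie in the open unit disk of ℝ² and v ∈ ℝ², v ≠ 0, and write n = (n₁,n₂) := x_b(x,v) and v = (v₁,v₂), so v·n < 0. Then the map x ↦ R_{x_b(x,v)} (with v fixed) is differentiable, and the 2×2 Jacobian matrices of its columns are: ∇_x(R¹_{x_b(x,v)}) = (1/(v·n))·[[−4v₂n₁n₂, 4v₁n₁n₂],[−2v₂(n₂²−n₁²), 2v₁(n₂²−n₁²)]] and ∇_x(R²_{x_b(x,v)}) = (1/(v·n))·[[−2v₂(n₂²−n₁²), 2v₁(n₂²−n₁²)],[4v₂n₁n₂, −4v₁n₁n₂]]. -/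
noncomputable section

open Matrix Real Set

/-! ### Auxiliary material for stmt7 -/

def proj2 (k : Fin 2) : E →L[ℝ] ℝ := EuclideanSpace.proj k

lemma s7_dot_self (u : E) : dot u u = ‖u‖^2 := by
  rw [← real_inner_self_eq_norm_sq]
  simp [dot, PiLp.inner_apply, Fin.sum_univ_two, RCLike.inner_apply]
  rw [EuclideanSpace.norm_eq, Real.sq_sqrt (by positivity), Fin.sum_univ_two]
  simp [sq]

lemma s7_norm_le_one_iff (u : E) : ‖u‖ ≤ 1 ↔ dot u u ≤ 1 := by
  rw [s7_dot_self]
  constructor <;> intro h <;> nlinarith [norm_nonneg u]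

lemma s7_sub_smul_apply (y v : E) (c : ℝ) (k : Fin 2) : (y - c • v) k = y k - c * v k := rfl

lemma s7_dot_expand (y v : E) (c : ℝ) :
    dot (y - c • v) (y - c • v) = dot y y - 2*c*dot y v + c^2 * dot v v := by
  simp only [dot, s7_sub_smul_apply]
  ring

/-- Explicit formula for the backward exit time. -/
def Tf (v y : E) : ℝ := (dot y v + Real.sqrt ((dot y v)^2 + dot v v * (1 - dot y y))) / dot v v

lemma tb_eq (v y : E) (hv : v ≠ 0) (hy : ‖y‖ < 1) : tb y v = Tf v y := by
  set a := dot v v with ha'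
  set b := dot y v with hb'
  set q := dot y y with hq'
  have ha : 0 < a := by
    rw [ha', s7_dot_self]
    have := norm_pos_iff.2 hv
    positivity
  have hq : q < 1 := by
    rw [hq', s7_dot_self]; nlinarith [norm_nonneg y]
  set d := b^2 + a*(1-q) with hd'
  have hd : 0 < d := by nlinarith
  set s := Real.sqrt d with hs'
  have hs2 : s^2 = b^2 + a*(1-q) := Real.sq_sqrt hd.le
  have hs : 0 < s := Real.sqrt_pos.2 hd
  have hbs : 0 ≤ b + s := by nlinarith
  have key : ∀ c : ℝ, (‖y - c • v‖ ≤ 1 ↔ q - 2*c*b + c^2*a ≤ 1) := by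
    intro c
    rw [s7_norm_le_one_iff, s7_dot_expand]
  have hT : Tf v y = (b + s)/a := rfl
  rw [tb, hT]
  apply IsGreatest.csSup_eq
  constructor
  · refine ⟨by positivity, ?_⟩
    rw [key]
    have e1 : q - 2*((b+s)/a)*b + ((b+s)/a)^2*a = 1 := by
      field_simp
      linear_combination hs2
    linarith [e1.le]
  · rintro c ⟨hc0, hc1⟩
    rw [key] at hc1
    have h1 : (a*c - b)^2 ≤ s^2 := by nlinarith
    have h2 : a*c - b ≤ s := by nlinarith
    rw [le_div_iff₀ ha]
    nlinarith

/-- Candidate derivative of `Tf`. -/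
def Lt (c : ℝ) (n : E) : E →L[ℝ] ℝ := c • ((n 0) • proj2 0 + (n 1) • proj2 1)

lemma hasFDerivAt_Tf (x v : E) (hx : ‖x‖ < 1) (hv : v ≠ 0) :
    HasFDerivAt (fun y => Tf v y)
      (Lt (dot v (x - Tf v x • v))⁻¹ (x - Tf v x • v)) x := by
  have ha : (0:ℝ) < dot v v := by
    rw [s7_dot_self]; have := norm_pos_iff.2 hv; positivity
  have hq : dot x x < 1 := by
    rw [s7_dot_self]; nlinarith [norm_nonneg x]
  have hd : (0:ℝ) < dot x v * dot x v + dot v v * (1 - dot x x) := by nlinarith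
  set d := dot x v * dot x v + dot v v * (1 - dot x x) with hd'
  have hs : (0:ℝ) < Real.sqrt d := Real.sqrt_pos.2 hd
  have hs2 : (Real.sqrt d) * Real.sqrt d = d := Real.mul_self_sqrt hd.le
  have Hb : HasFDerivAt (fun y : E => dot y v)
      ((v 0) • proj2 0 + (v 1) • proj2 1) x :=
    ((proj2 0).hasFDerivAt.mul_const (v 0)).add ((proj2 1).hasFDerivAt.mul_const (v 1))
  have Hq : HasFDerivAt (fun y : E => dot y y)
      ((x 0 • proj2 0 + x 0 • proj2 0) + (x 1 • proj2 1 + x 1 • proj2 1)) x :=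
    ((proj2 0).hasFDerivAt.mul (proj2 0).hasFDerivAt).add
      ((proj2 1).hasFDerivAt.mul (proj2 1).hasFDerivAt)
  have Hu : HasFDerivAt (fun y : E => dot y v * dot y v + dot v v * (1 - dot y y)) _ x :=
    (Hb.mul Hb).add (((hasFDerivAt_const (1:ℝ) x).sub Hq).const_mul (dot v v))
  have Hs : HasFDerivAt (fun y : E => Real.sqrt (dot y v * dot y v + dot v v * (1 - dot y y))) _ x :=
    (Real.hasDerivAt_sqrt hd.ne').comp_hasFDerivAt x Hu
  have HT : HasFDerivAt
      (fun y : E => (dot y v + Real.sqrt (dot y v * dot y v + dot v v * (1 - dot y y))) * (dot v v)⁻¹)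
      _ x := (Hb.add Hs).mul_const ((dot v v)⁻¹)
  have hfun : (fun y => Tf v y)
      = (fun y : E => (dot y v + Real.sqrt (dot y v * dot y v + dot v v * (1 - dot y y))) * (dot v v)⁻¹) := by
    funext y; simp only [Tf, pow_two, div_eq_mul_inv]
  rw [hfun]
  have hTx : Tf v x = (dot x v + Real.sqrt d) / dot v v := by
    rw [Tf, pow_two, ← hd']
  have hxv : dot v x = dot x v := by simp only [dot]; ring
  have hvn : dot v (x - Tf v x • v) = -Real.sqrt d := by
    have h1 : dot v (x - Tf v x • v) = dot v x - Tf v x * dot v v := by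
      simp only [dot, s7_sub_smul_apply]; ring
    rw [h1, hTx, hxv]
    field_simp
    ring
  refine HT.congr_fderiv ?_
  ext h
  simp only [Lt, hvn, s7_sub_smul_apply, hTx, ContinuousLinearMap.smul_apply,
    ContinuousLinearMap.add_apply, ContinuousLinearMap.sub_apply, ContinuousLinearMap.zero_apply,
    smul_eq_mul, proj2, PiLp.proj_apply]
  have hvn2 : dot v (x - ((dot x v + Real.sqrt d) / dot v v) • v) = -Real.sqrt d := by
    rw [← hTx]; exact hvn
  rw [hvn2]
  have ha' : v 0 * v 0 + v 1 * v 1 ≠ 0 := by simp only [dot] at ha; linarith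
  simp only [dot]
  have ha'' : v 0 ^ 2 + v 1 ^ 2 ≠ 0 := by rw [sq, sq]; exact ha'
  field_simp [hs.ne']
  ring

lemma dot_v_xb_neg (x v : E) (hx : ‖x‖ < 1) (hv : v ≠ 0) : dot v (xb x v) < 0 := by
  have ha : (0:ℝ) < dot v v := by
    rw [s7_dot_self]; have := norm_pos_iff.2 hv; positivity
  have hq : dot x x < 1 := by
    rw [s7_dot_self]; nlinarith [norm_nonneg x]
  have hd : (0:ℝ) < (dot x v)^2 + dot v v * (1 - dot x x) := by nlinarith
  set d := (dot x v)^2 + dot v v * (1 - dot x x) with hd'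
  have hs : (0:ℝ) < Real.sqrt d := Real.sqrt_pos.2 hd
  have hxbx : xb x v = x - Tf v x • v := by rw [xb, tb_eq v x hv hx]
  have hTx : Tf v x = (dot x v + Real.sqrt d) / dot v v := by rw [Tf, ← hd']
  have h1 : dot v (xb x v) = dot v x - Tf v x * dot v v := by
    rw [hxbx]; simp only [dot, s7_sub_smul_apply]; ring
  have hxv : dot v x = dot x v := by simp only [dot]; ring
  rw [h1, hTx, hxv]
  have : dot x v - (dot x v + Real.sqrt d) / dot v v * dot v v = -Real.sqrt d := by
    field_simp
    ring
  rw [this]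
  linarith

lemma hasFDerivAt_xb (x v : E) (hx : ‖x‖ < 1) (hv : v ≠ 0) :
    HasFDerivAt (fun y => xb y v)
      (ContinuousLinearMap.id ℝ E - (Lt (dot v (xb x v))⁻¹ (xb x v)).smulRight v) x := by
  have hxbx : xb x v = x - Tf v x • v := by rw [xb, tb_eq v x hv hx]
  rw [hxbx]
  have hev : (fun y => xb y v) =ᶠ[nhds x] (fun y => y - Tf v y • v) := by
    have hball : ∀ᶠ y in nhds x, ‖y‖ < 1 := by
      have : Metric.ball (0:E) 1 ∈ nhds x := Metric.isOpen_ball.mem_nhds (mem_ball_zero_iff.2 hx)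
      filter_upwards [this] with y hy using mem_ball_zero_iff.1 hy
    filter_upwards [hball] with y hy
    rw [xb, tb_eq v y hv hy]
  have H : HasFDerivAt (fun y : E => y - Tf v y • v)
      (ContinuousLinearMap.id ℝ E
        - (Lt (dot v (x - Tf v x • v))⁻¹ (x - Tf v x • v)).smulRight v) x :=
    (hasFDerivAt_id x).sub ((hasFDerivAt_Tf x v hx hv).smul_const v)
  exact H.congr_of_eventuallyEq hev

/-- Main helper: derivative of a column of `Rmat (xb y v)`. -/
lemma s7_key (x v : E) (hx : ‖x‖ < 1) (hv : v ≠ 0) (i : Fin 2)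
    (M : Matrix (Fin 2) (Fin 2) ℝ)
    (hM : ∀ (k : Fin 2) (h : E),
      M k 0 * h 0 + M k 1 * h 1 =
        -(2 * ((xb x v) k
            * (h i - (dot v (xb x v))⁻¹ * ((xb x v) 0 * h 0 + (xb x v) 1 * h 1) * v i)
          + (xb x v) i
            * (h k - (dot v (xb x v))⁻¹ * ((xb x v) 0 * h 0 + (xb x v) 1 * h 1) * v k)))) :
    HasFDerivAt (fun y => colE (Rmat (xb y v)) i) (toCLM M) x := by
  have Hxb := hasFDerivAt_xb x v hx hv
  set Ln := ContinuousLinearMap.id ℝ E - (Lt (dot v (xb x v))⁻¹ (xb x v)).smulRight v with hLn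
  have Hk : ∀ k : Fin 2, HasFDerivAt (fun y => xb y v k) ((proj2 k).comp Ln) x :=
    fun k => (proj2 k).hasFDerivAt.comp x Hxb
  set iso := EuclideanSpace.equiv (Fin 2) ℝ with hiso
  refine (iso.comp_hasFDerivAt_iff).mp (hasFDerivAt_pi'.mpr fun k => ?_)
  have Hfun : HasFDerivAt
      (fun y => (1:Matrix (Fin 2) (Fin 2) ℝ) k i - 2*(xb y v k * xb y v i))
      ((0 : E →L[ℝ] ℝ) - (2:ℝ) • ((xb x v k) • ((proj2 i).comp Ln) + (xb x v i) • ((proj2 k).comp Ln)))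
      x := (hasFDerivAt_const _ _).sub (((Hk k).mul (Hk i)).const_mul 2)
  have hfe : (fun y => ((iso ∘ fun y => colE (Rmat (xb y v)) i) y) k)
      = (fun y => (1:Matrix (Fin 2) (Fin 2) ℝ) k i - 2*(xb y v k * xb y v i)) := by
    funext y
    rfl
  rw [hfe]
  refine Hfun.congr_fderiv ?_
  ext h
  simp only [ContinuousLinearMap.sub_apply, ContinuousLinearMap.zero_apply,
    ContinuousLinearMap.smul_apply, ContinuousLinearMap.add_apply, ContinuousLinearMap.comp_apply,
    ContinuousLinearMap.proj_apply, ContinuousLinearMap.coe_comp', Function.comp_apply,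
    smul_eq_mul, hLn, ContinuousLinearMap.coe_sub', ContinuousLinearMap.coe_id', Pi.sub_apply,
    ContinuousLinearMap.smulRight_apply, ContinuousLinearMap.id_apply, Lt, proj2,
    PiLp.proj_apply, s7_sub_smul_apply]
  rw [zero_sub, ← hM k h]
  show M k 0 * h 0 + M k 1 * h 1 = M.mulVec ((WithLp.equiv 2 (Fin 2 → ℝ)) h) k
  simp [Matrix.mulVec, dotProduct, Fin.sum_univ_two]

/-- Jacobians in x of the columns of x ↦ R_{x_b(x,v)}. -/
theorem stmt7 (x v : E) (hx : ‖x‖ < 1) (hv : v ≠ 0) :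
    let n := xb x v
    HasFDerivAt (fun y => colE (Rmat (xb y v)) 0)
      (toCLM ((dot v n)⁻¹ •
        !![-4 * v 1 * n 0 * n 1, 4 * v 0 * n 0 * n 1;
           -2 * v 1 * (n 1 ^ 2 - n 0 ^ 2), 2 * v 0 * (n 1 ^ 2 - n 0 ^ 2)])) x ∧
    HasFDerivAt (fun y => colE (Rmat (xb y v)) 1)
      (toCLM ((dot v n)⁻¹ •
        !![-2 * v 1 * (n 1 ^ 2 - n 0 ^ 2), 2 * v 0 * (n 1 ^ 2 - n 0 ^ 2);
           4 * v 1 * n 0 * n 1, -4 * v 0 * n 0 * n 1])) x := by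
  intro n
  have hvn : dot v n < 0 := dot_v_xb_neg x v hx hv
  have hvne : v 0 * n 0 + v 1 * n 1 ≠ 0 := by
    simp only [dot] at hvn; intro h; rw [h] at hvn; exact lt_irrefl 0 hvn
  have hvne' : dot v (xb x v) ≠ 0 := hvn.ne
  constructor
  · apply s7_key x v hx hv 0
    intro k h
    fin_cases k <;>
    · simp only [Matrix.smul_apply, Matrix.cons_val', Matrix.cons_val_zero, Matrix.cons_val_one,
        Matrix.head_cons, Matrix.head_fin_const, Matrix.empty_val', Matrix.cons_val_fin_one, Fin.zero_eta, Fin.mk_one, Matrix.of_apply,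
        smul_eq_mul, n]
      field_simp
      simp only [dot]
      ring
  · apply s7_key x v hx hv 1
    intro k h
    fin_cases k <;>
    · simp only [Matrix.smul_apply, Matrix.cons_val', Matrix.cons_val_zero, Matrix.cons_val_one,
        Matrix.head_cons, Matrix.head_fin_const, Matrix.empty_val', Matrix.cons_val_fin_one, Fin.zero_eta, Fin.mk_one, Matrix.of_apply,
        smul_eq_mul, n]
      field_simp
      simp only [dot]
      ring
end
end

section
/- Let x lie in the open unit disk of ℝ² and v ∈ ℝ², v ≠ 0, and write n := x_b(x,v). Then: (i) ∂_{x₂}(−2A¹_{v,x_b(x,v)}) = ∂_{x₁}(−2A²_{v,x_b(x,v)}), i.e. the x₂-partial of the first column of the map x ↦ −2A_{v,x_b(x,v)} equals the x₁-partial of its second column; and (ii) setting u := ∂_{x₂}(R¹_{x_b(x,v)}) − ∂_{x₁}(R²_{x_b(x,v)}) ∈ ℝ², a row vector w ∈ ℝ² satisfies w·u = 0 if and only if w is a scalar multiple of (R_n v)ᵀ. -/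
noncomputable section

open Matrix Real Set

def ip2 (v y : E) : ℝ := v 0 * y 0 + v 1 * y 1
def msq (v : E) : ℝ := v 0 ^ 2 + v 1 ^ 2
def Del (v y : E) : ℝ := ip2 v y ^ 2 + (1 - (y 0 ^ 2 + y 1 ^ 2)) * msq v
def gfun (v y : E) : ℝ := (ip2 v y + Real.sqrt (Del v y)) / msq v

lemma st12_normsq (y : E) : ‖y‖ ^ 2 = y 0 ^ 2 + y 1 ^ 2 := by
  have h : ‖y‖ = Real.sqrt (y 0 ^ 2 + y 1 ^ 2) := by
    rw [EuclideanSpace.norm_eq]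
    simp [Fin.sum_univ_two, Real.norm_eq_abs, sq_abs]
  rw [h, Real.sq_sqrt (by positivity)]

lemma st12_msq_pos {v : E} (hv : v ≠ 0) : 0 < msq v := by
  have h0 : v 0 ≠ 0 ∨ v 1 ≠ 0 := by
    by_contra h
    push_neg at h
    exact hv (by ext i; fin_cases i <;> simp [h.1, h.2])
  unfold msq
  rcases h0 with h | h
  · positivity
  · positivity

lemma st12_Del_pos {v : E} (hv : v ≠ 0) {y : E} (hy : ‖y‖ < 1) : 0 < Del v y := by
  have h1 : y 0 ^ 2 + y 1 ^ 2 < 1 := by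
    rw [← st12_normsq]; nlinarith [norm_nonneg y]
  have h2 := st12_msq_pos hv
  have := sq_nonneg (ip2 v y)
  unfold Del
  nlinarith

lemma st12_sub_smul_apply (y v : E) (s : ℝ) (k : Fin 2) :
    (y - s • v) k = y k - s * v k := by
  simp [PiLp.sub_apply, PiLp.smul_apply, smul_eq_mul]

lemma st12_norm_le_iff (y v : E) (s : ℝ) :
    ‖y - s • v‖ ≤ 1 ↔ msq v * s ^ 2 - 2 * ip2 v y * s + (y 0 ^ 2 + y 1 ^ 2) - 1 ≤ 0 := by
  have e1 : ‖y - s • v‖ ^ 2 = (y 0 - s * v 0) ^ 2 + (y 1 - s * v 1) ^ 2 := by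
    rw [st12_normsq, st12_sub_smul_apply, st12_sub_smul_apply]
  constructor
  · intro h
    have := norm_nonneg (y - s • v)
    simp only [msq, ip2]
    nlinarith
  · intro h
    have := norm_nonneg (y - s • v)
    simp only [msq, ip2] at h
    nlinarith

lemma st12_tb_eq {v : E} (hv : v ≠ 0) {y : E} (hy : ‖y‖ < 1) : tb y v = gfun v y := by
  have hm := st12_msq_pos hv
  have hD := st12_Del_pos hv hy
  set m := msq v with hmdef
  set b := ip2 v y with hbdef
  set s0 := Real.sqrt (Del v y) with hs0def
  have hs0 : 0 < s0 := Real.sqrt_pos.2 hD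
  have hs0sq : s0 ^ 2 = Del v y := Real.sq_sqrt hD.le
  have hDel : Del v y = b ^ 2 + (1 - (y 0 ^ 2 + y 1 ^ 2)) * m := rfl
  have hnsq : y 0 ^ 2 + y 1 ^ 2 < 1 := by
    rw [← st12_normsq]; nlinarith [norm_nonneg y]
  have hr : gfun v y = (b + s0) / m := rfl
  have hrmem : gfun v y ∈ {s : ℝ | 0 ≤ s ∧ ‖y - s • v‖ ≤ 1} := by
    constructor
    · rw [hr]
      apply div_nonneg _ hm.le
      nlinarith
    · rw [st12_norm_le_iff, hr]
      have : m * ((b + s0) / m) ^ 2 - 2 * b * ((b + s0) / m) + (y 0 ^ 2 + y 1 ^ 2) - 1 = 0 := by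
        field_simp
        nlinarith
      linarith [this]
  have hub : ∀ s ∈ {s : ℝ | 0 ≤ s ∧ ‖y - s • v‖ ≤ 1}, s ≤ gfun v y := by
    rintro s ⟨hs0', hsle⟩
    rw [st12_norm_le_iff] at hsle
    rw [hr, ← hmdef, ← hbdef] at *
    have hq : (m * s - b) ^ 2 ≤ s0 ^ 2 := by nlinarith
    have key : m * s - b ≤ s0 := by nlinarith
    rw [le_div_iff₀ hm]
    linarith
  unfold tb
  apply le_antisymm
  · exact csSup_le ⟨gfun v y, hrmem⟩ hub
  · exact le_csSup ⟨gfun v y, fun s hs => hub s hs⟩ hrmem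

lemma st12_xb_apply (y v : E) (k : Fin 2) : xb y v k = y k - tb y v * v k := by
  unfold xb; exact st12_sub_smul_apply y v (tb y v) k

lemma st12_xb_facts {v : E} (hv : v ≠ 0) {y : E} (hy : ‖y‖ < 1) :
    (xb y v 0) ^ 2 + (xb y v 1) ^ 2 = 1 ∧
    v 0 * xb y v 0 + v 1 * xb y v 1 = -Real.sqrt (Del v y) := by
  have hm := st12_msq_pos hv
  have hD := st12_Del_pos hv hy
  have hs0sq : Real.sqrt (Del v y) ^ 2 = Del v y := Real.sq_sqrt hD.le
  have ht : tb y v = (ip2 v y + Real.sqrt (Del v y)) / msq v := st12_tb_eq hv hy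
  have h0 := st12_xb_apply y v 0
  have h1 := st12_xb_apply y v 1
  have hDel : Del v y = ip2 v y ^ 2 + (1 - (y 0 ^ 2 + y 1 ^ 2)) * msq v := rfl
  constructor
  · rw [h0, h1, ht]
    field_simp
    unfold msq ip2 at *
    nlinarith
  · rw [h0, h1, ht]
    field_simp
    unfold msq ip2 at *
    ring_nf

def pr (k : Fin 2) : E →L[ℝ] ℝ := EuclideanSpace.proj k

def lm (c0 c1 : ℝ) : E →L[ℝ] ℝ := c0 • pr 0 + c1 • pr 1

lemma lm_apply (c0 c1 : ℝ) (h : E) : lm c0 c1 h = c0 * h 0 + c1 * h 1 := by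
  simp [lm, pr]

lemma st12_ball_ev {x : E} (hx : ‖x‖ < 1) : ∀ᶠ y in nhds x, ‖y‖ < 1 :=
  (isOpen_lt continuous_norm continuous_const).eventually_mem hx

lemma st12_hasFDerivAt_xb {x v : E} (hx : ‖x‖ < 1) (hv : v ≠ 0) (k : Fin 2) :
    HasFDerivAt (fun y => xb y v k)
      (lm ((if k = 0 then 1 else 0) - (v 0 * xb x v 0 + v 1 * xb x v 1)⁻¹ * xb x v 0 * v k)
          ((if k = 1 then 1 else 0) - (v 0 * xb x v 0 + v 1 * xb x v 1)⁻¹ * xb x v 1 * v k)) x := by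
  have hm := st12_msq_pos hv
  have hD := st12_Del_pos hv hx
  have hs0 : (0:ℝ) < Real.sqrt (Del v x) := Real.sqrt_pos.2 hD
  have hd : v 0 * xb x v 0 + v 1 * xb x v 1 = -Real.sqrt (Del v x) := (st12_xb_facts hv hx).2
  have hD0 : HasFDerivAt (fun y : E => y 0) (pr 0) x := (pr 0).hasFDerivAt
  have hD1 : HasFDerivAt (fun y : E => y 1) (pr 1) x := (pr 1).hasFDerivAt
  have hDk : HasFDerivAt (fun y : E => y k) (pr k) x := (pr k).hasFDerivAt
  have hip : HasFDerivAt (fun y : E => ip2 v y) ((v 0) • pr 0 + (v 1) • pr 1) x :=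
    (hD0.const_mul (v 0)).add (hD1.const_mul (v 1))
  have hnsq := ((hasDerivAt_pow 2 (x 0)).comp_hasFDerivAt x hD0).add
    ((hasDerivAt_pow 2 (x 1)).comp_hasFDerivAt x hD1)
  have hDel' := ((hasDerivAt_pow 2 (ip2 v x)).comp_hasFDerivAt x hip).add
    ((hnsq.const_sub 1).mul_const (msq v))
  have hDel : HasFDerivAt (fun y : E => Del v y) _ x := hDel'
  have hsqrt := hDel.sqrt (ne_of_gt hD)
  have hbig := hDk.sub (((hip.add hsqrt).mul_const ((msq v)⁻¹)).mul_const (v k))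
  have hev : (fun y => xb y v k) =ᶠ[nhds x]
      (fun y : E => y k - (ip2 v y + Real.sqrt (Del v y)) * (msq v)⁻¹ * v k) := by
    filter_upwards [st12_ball_ev hx] with y hy
    rw [st12_xb_apply, st12_tb_eq hv hy, gfun, div_eq_mul_inv]
  refine HasFDerivAt.congr_of_eventuallyEq ?_ hev
  refine hbig.congr_fderiv ?_
  refine ContinuousLinearMap.ext fun h => ?_
  rw [lm_apply]
  have hxb0 : xb x v 0 = x 0 - (ip2 v x + Real.sqrt (Del v x)) / msq v * v 0 := by
    rw [st12_xb_apply, st12_tb_eq hv hx, gfun]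
  have hxb1 : xb x v 1 = x 1 - (ip2 v x + Real.sqrt (Del v x)) / msq v * v 1 := by
    rw [st12_xb_apply, st12_tb_eq hv hx, gfun]
  rw [hd, hxb0, hxb1]
  simp only [ContinuousLinearMap.add_apply, ContinuousLinearMap.sub_apply,
    ContinuousLinearMap.smul_apply, ContinuousLinearMap.comp_apply, smul_eq_mul, pr,
    PiLp.proj_apply, one_div, ContinuousLinearMap.neg_apply]
  have hprk : (EuclideanSpace.proj k : E →L[ℝ] ℝ) h = h k := rfl
  have hk01 : h k = (if k = 0 then 1 else 0) * h 0 + (if k = 1 then 1 else 0) * h 1 := by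
    fin_cases k <;> simp
  fin_cases k
  · simp only [Fin.isValue, Fin.zero_eta, if_true, one_ne_zero, zero_ne_one, if_false, reduceIte]
    field_simp
    ring
  · simp only [Fin.isValue, Fin.mk_one, if_true, one_ne_zero, if_false, reduceIte]
    field_simp
    ring

lemma st12_fd_poly {x : E} {N0 N1 : E → ℝ} {L0 L1 : E →L[ℝ] ℝ}
    (h0 : HasFDerivAt N0 L0 x) (h1 : HasFDerivAt N1 L1 x)
    (p q : ℝ) (hdne : p * N0 x + q * N1 x ≠ 0)
    (c0 c1 c2 c4 c5 c6 c7 c8 c9 : ℝ) :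
    HasFDerivAt (fun y => c0 + c1 * N0 y + c2 * N1 y +
        (c7 * (N0 y * N0 y) + c8 * (N0 y * N1 y) + c9 * (N1 y * N1 y)) +
        (c4 * (N0 y * N0 y) + c5 * (N0 y * N1 y) + c6 * (N1 y * N1 y)) * (p * N0 y + q * N1 y)⁻¹)
      ((c1 + 2 * c7 * N0 x + c8 * N1 x
          + (2 * c4 * N0 x + c5 * N1 x) * (p * N0 x + q * N1 x)⁻¹
          - (c4 * (N0 x * N0 x) + c5 * (N0 x * N1 x) + c6 * (N1 x * N1 x)) * p
              * ((p * N0 x + q * N1 x) * (p * N0 x + q * N1 x))⁻¹) • L0 +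
       (c2 + c8 * N0 x + 2 * c9 * N1 x
          + (c5 * N0 x + 2 * c6 * N1 x) * (p * N0 x + q * N1 x)⁻¹
          - (c4 * (N0 x * N0 x) + c5 * (N0 x * N1 x) + c6 * (N1 x * N1 x)) * q
              * ((p * N0 x + q * N1 x) * (p * N0 x + q * N1 x))⁻¹) • L1) x := by
  have hsum := (h0.const_mul p).add (h1.const_mul q)
  have hinv := (hasDerivAt_inv hdne).comp_hasFDerivAt x hsum
  have h00 := h0.mul h0
  have h01 := h0.mul h1
  have h11 := h1.mul h1
  have hq1 := ((h00.const_mul c7).add (h01.const_mul c8)).add (h11.const_mul c9)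
  have hq2 := ((h00.const_mul c4).add (h01.const_mul c5)).add (h11.const_mul c6)
  have hlast := hq2.mul hinv
  have hbig := (((((h0.const_mul c1).const_add c0).add (h1.const_mul c2)).add hq1).add hlast)
  refine hbig.congr_fderiv ?_
  refine ContinuousLinearMap.ext fun h => ?_
  simp only [ContinuousLinearMap.add_apply, ContinuousLinearMap.smul_apply,
    ContinuousLinearMap.sub_apply, smul_eq_mul, Function.comp_apply, Pi.add_apply, Pi.mul_apply]
  ring

lemma st12_fderiv_toE_apply {x u : E} {F : Fin 2 → E → ℝ} {L : Fin 2 → E →L[ℝ] ℝ}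
    (h : ∀ k, HasFDerivAt (F k) (L k) x) :
    fderiv ℝ (fun y => toE (fun k => F k y)) x u = toE (fun k => L k u) := by
  have hpi : HasFDerivAt (fun (y : E) (k : Fin 2) => F k y) (ContinuousLinearMap.pi L) x :=
    hasFDerivAt_pi.2 h
  have hcl := (((PiLp.continuousLinearEquiv 2 ℝ (fun _ : Fin 2 => ℝ)).symm.toContinuousLinearMap).hasFDerivAt).comp x hpi
  have hfun : (fun y => toE (fun k => F k y)) =
      ⇑((PiLp.continuousLinearEquiv 2 ℝ (fun _ : Fin 2 => ℝ)).symm.toContinuousLinearMap) ∘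
        (fun (y : E) (k : Fin 2) => F k y) := rfl
  rw [hfun, hcl.fderiv]
  rfl

def cD (v n : E) (c1 c2 c4 c5 c6 c7 c8 c9 : ℝ) (j : Fin 2) : ℝ :=
  (c1 + 2 * c7 * n 0 + c8 * n 1 + (2 * c4 * n 0 + c5 * n 1) * (v 0 * n 0 + v 1 * n 1)⁻¹
      - (c4 * (n 0 * n 0) + c5 * (n 0 * n 1) + c6 * (n 1 * n 1)) * v 0 *
        ((v 0 * n 0 + v 1 * n 1) * (v 0 * n 0 + v 1 * n 1))⁻¹) *
    ((if (0 : Fin 2) = j then 1 else 0) - (v 0 * n 0 + v 1 * n 1)⁻¹ * n j * v 0) +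
  (c2 + c8 * n 0 + 2 * c9 * n 1 + (c5 * n 0 + 2 * c6 * n 1) * (v 0 * n 0 + v 1 * n 1)⁻¹
      - (c4 * (n 0 * n 0) + c5 * (n 0 * n 1) + c6 * (n 1 * n 1)) * v 1 *
        ((v 0 * n 0 + v 1 * n 1) * (v 0 * n 0 + v 1 * n 1))⁻¹) *
    ((if (1 : Fin 2) = j then 1 else 0) - (v 0 * n 0 + v 1 * n 1)⁻¹ * n j * v 1)

lemma st12_master {x v : E} (hx : ‖x‖ < 1) (hv : v ≠ 0)
    (c0 c1 c2 c4 c5 c6 c7 c8 c9 : ℝ) (F : E → ℝ)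
    (hF : ∀ y : E, ‖y‖ < 1 → F y = c0 + c1 * xb y v 0 + c2 * xb y v 1 +
        (c7 * (xb y v 0 * xb y v 0) + c8 * (xb y v 0 * xb y v 1) + c9 * (xb y v 1 * xb y v 1)) +
        (c4 * (xb y v 0 * xb y v 0) + c5 * (xb y v 0 * xb y v 1) + c6 * (xb y v 1 * xb y v 1)) *
          (v 0 * xb y v 0 + v 1 * xb y v 1)⁻¹) :
    ∃ D : E →L[ℝ] ℝ, HasFDerivAt F D x ∧
      ∀ j : Fin 2, D (EuclideanSpace.single j 1) =
        cD v (xb x v) c1 c2 c4 c5 c6 c7 c8 c9 j := by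
  have hD := st12_Del_pos hv hx
  have hs0 : (0:ℝ) < Real.sqrt (Del v x) := Real.sqrt_pos.2 hD
  have hdfact : v 0 * xb x v 0 + v 1 * xb x v 1 = -Real.sqrt (Del v x) := (st12_xb_facts hv hx).2
  have hdne : v 0 * xb x v 0 + v 1 * xb x v 1 ≠ 0 := by rw [hdfact]; exact neg_ne_zero.2 hs0.ne'
  have h0 := st12_hasFDerivAt_xb hx hv 0
  have h1 := st12_hasFDerivAt_xb hx hv 1
  have hcan := st12_fd_poly h0 h1 (v 0) (v 1) hdne c0 c1 c2 c4 c5 c6 c7 c8 c9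
  have hev : F =ᶠ[nhds x] (fun y => c0 + c1 * xb y v 0 + c2 * xb y v 1 +
        (c7 * (xb y v 0 * xb y v 0) + c8 * (xb y v 0 * xb y v 1) + c9 * (xb y v 1 * xb y v 1)) +
        (c4 * (xb y v 0 * xb y v 0) + c5 * (xb y v 0 * xb y v 1) + c6 * (xb y v 1 * xb y v 1)) *
          (v 0 * xb y v 0 + v 1 * xb y v 1)⁻¹) := by
    filter_upwards [st12_ball_ev hx] with y hy using hF y hy
  refine ⟨_, hcan.congr_of_eventuallyEq hev, ?_⟩
  intro j
  simp only [ContinuousLinearMap.add_apply, ContinuousLinearMap.smul_apply, lm_apply,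
    smul_eq_mul, EuclideanSpace.single_apply, cD]
  fin_cases j <;> simp only [Fin.zero_eta, Fin.mk_one, Fin.isValue] <;> norm_num <;> ring


/-- symmetry ∂_{x₂}(−2A¹) = ∂_{x₁}(−2A²) along the exit point,
    and w·(∂_{x₂}R¹ − ∂_{x₁}R²) = 0 iff w ∥ (R_n v)ᵀ. -/
theorem stmt12 (x v : E) (hx : ‖x‖ < 1) (hv : v ≠ 0) :
    let n := xb x v
    let e : Fin 2 → E := fun j => EuclideanSpace.single j 1
    fderiv ℝ (fun y => colE ((-2 : ℝ) • Amat v (xb y v)) 0) x (e 1) =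
      fderiv ℝ (fun y => colE ((-2 : ℝ) • Amat v (xb y v)) 1) x (e 0) ∧
    (∀ w : E,
      dot w (fderiv ℝ (fun y => colE (Rmat (xb y v)) 0) x (e 1) -
             fderiv ℝ (fun y => colE (Rmat (xb y v)) 1) x (e 0)) = 0 ↔
        ∃ c : ℝ, w = c • mulV (Rmat n) v) := by
  intro n e
  have hn : n = xb x v := rfl
  have he1 : e 1 = EuclideanSpace.single 1 1 := rfl
  have he0 : e 0 = EuclideanSpace.single 0 1 := rfl
  have hDp := st12_Del_pos hv hx
  have hs0 : (0:ℝ) < Real.sqrt (Del v x) := Real.sqrt_pos.2 hDp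
  obtain ⟨habsq, hdfact⟩ := st12_xb_facts hv hx
  have hdne : v 0 * xb x v 0 + v 1 * xb x v 1 ≠ 0 := by
    rw [hdfact]; exact neg_ne_zero.2 hs0.ne'
  have hdinv : (v 0 * xb x v 0 + v 1 * xb x v 1) * (v 0 * xb x v 0 + v 1 * xb x v 1)⁻¹ = 1 :=
    mul_inv_cancel₀ hdne
  have hm : (0:ℝ) < v 0 ^ 2 + v 1 ^ 2 := st12_msq_pos hv
  have hent : ∀ y : E, ‖y‖ < 1 → (v 0 * xb y v 0 + v 1 * xb y v 1) ≠ 0 := fun y hy => by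
    rw [(st12_xb_facts hv hy).2]
    exact neg_ne_zero.2 (Real.sqrt_pos.2 (st12_Del_pos hv hy)).ne'
  -- the eight entry derivatives
  obtain ⟨DA00, hDA00, vA00⟩ := st12_master hx hv 0 (-2*v 0) (-2*v 1) (2*(v 0*v 0+v 1*v 1)) 0 0 0 0 0
    (fun y => ((-2:ℝ) • Amat v (xb y v)) 0 0) (fun y hy => by
      have hdy := hent y hy
      simp only [Matrix.smul_apply, smul_eq_mul, Amat, dot, outer, Matrix.mul_apply,
        Fin.sum_univ_two, Matrix.add_apply, Matrix.sub_apply, Matrix.one_apply, Matrix.of_apply]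
      norm_num [Fin.ext_iff]
      field_simp
      ring)
  obtain ⟨DA10, hDA10, vA10⟩ := st12_master hx hv 0 (2*v 1) (-2*v 0) 0 (2*(v 0*v 0+v 1*v 1)) 0 0 0 0
    (fun y => ((-2:ℝ) • Amat v (xb y v)) 1 0) (fun y hy => by
      have hdy := hent y hy
      have hdy2 : xb y v 1 * v 1 + v 0 * xb y v 0 ≠ 0 := by intro h; apply hdy; linarith
      simp only [Matrix.smul_apply, smul_eq_mul, Amat, dot, outer, Matrix.mul_apply,
        Fin.sum_univ_two, Matrix.add_apply, Matrix.sub_apply, Matrix.one_apply, Matrix.of_apply]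
      norm_num [Fin.ext_iff]
      field_simp
      linear_combination (xb y v 0 * v 1) * mul_inv_cancel₀ hdy2)
  obtain ⟨DA01, hDA01, vA01⟩ := st12_master hx hv 0 (-2*v 1) (2*v 0) 0 (2*(v 0*v 0+v 1*v 1)) 0 0 0 0
    (fun y => ((-2:ℝ) • Amat v (xb y v)) 0 1) (fun y hy => by
      have hdy := hent y hy
      simp only [Matrix.smul_apply, smul_eq_mul, Amat, dot, outer, Matrix.mul_apply,
        Fin.sum_univ_two, Matrix.add_apply, Matrix.sub_apply, Matrix.one_apply, Matrix.of_apply]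
      norm_num [Fin.ext_iff]
      field_simp
      ring)
  obtain ⟨DA11, hDA11, vA11⟩ := st12_master hx hv 0 (-2*v 0) (-2*v 1) 0 0 (2*(v 0*v 0+v 1*v 1)) 0 0 0
    (fun y => ((-2:ℝ) • Amat v (xb y v)) 1 1) (fun y hy => by
      have hdy := hent y hy
      have hdy2 : xb y v 1 * v 1 + v 0 * xb y v 0 ≠ 0 := by intro h; apply hdy; linarith
      simp only [Matrix.smul_apply, smul_eq_mul, Amat, dot, outer, Matrix.mul_apply,
        Fin.sum_univ_two, Matrix.add_apply, Matrix.sub_apply, Matrix.one_apply, Matrix.of_apply]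
      norm_num [Fin.ext_iff]
      field_simp
      linear_combination (xb y v 1 * v 1) * mul_inv_cancel₀ hdy2)
  obtain ⟨DR00, hDR00, vR00⟩ := st12_master hx hv 1 0 0 0 0 0 (-2) 0 0
    (fun y => (Rmat (xb y v)) 0 0) (fun y hy => by
      simp only [Rmat, outer, Matrix.sub_apply, Matrix.smul_apply, Matrix.one_apply,
        Matrix.of_apply, smul_eq_mul]
      norm_num [Fin.ext_iff]
      try ring)
  obtain ⟨DR10, hDR10, vR10⟩ := st12_master hx hv 0 0 0 0 0 0 0 (-2) 0
    (fun y => (Rmat (xb y v)) 1 0) (fun y hy => by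
      simp only [Rmat, outer, Matrix.sub_apply, Matrix.smul_apply, Matrix.one_apply,
        Matrix.of_apply, smul_eq_mul]
      norm_num [Fin.ext_iff]
      try ring)
  obtain ⟨DR01, hDR01, vR01⟩ := st12_master hx hv 0 0 0 0 0 0 0 (-2) 0
    (fun y => (Rmat (xb y v)) 0 1) (fun y hy => by
      simp only [Rmat, outer, Matrix.sub_apply, Matrix.smul_apply, Matrix.one_apply,
        Matrix.of_apply, smul_eq_mul]
      norm_num [Fin.ext_iff]
      try ring)
  obtain ⟨DR11, hDR11, vR11⟩ := st12_master hx hv 1 0 0 0 0 0 0 0 (-2)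
    (fun y => (Rmat (xb y v)) 1 1) (fun y hy => by
      simp only [Rmat, outer, Matrix.sub_apply, Matrix.smul_apply, Matrix.one_apply,
        Matrix.of_apply, smul_eq_mul]
      norm_num [Fin.ext_iff]
      try ring)
  -- assemble the E-valued derivatives
  have hcolA0 : fderiv ℝ (fun y => colE ((-2:ℝ) • Amat v (xb y v)) 0) x
      (EuclideanSpace.single 1 1) =
      toE (fun k => ![DA00, DA10] k (EuclideanSpace.single 1 1)) :=
    st12_fderiv_toE_apply (fun k => by
      fin_cases k <;>
        simp only [Fin.zero_eta, Fin.mk_one, Matrix.cons_val_zero, Matrix.cons_val_one,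
          Matrix.head_cons]
      · exact hDA00
      · exact hDA10)
  have hcolA1 : fderiv ℝ (fun y => colE ((-2:ℝ) • Amat v (xb y v)) 1) x
      (EuclideanSpace.single 0 1) =
      toE (fun k => ![DA01, DA11] k (EuclideanSpace.single 0 1)) :=
    st12_fderiv_toE_apply (fun k => by
      fin_cases k <;>
        simp only [Fin.zero_eta, Fin.mk_one, Matrix.cons_val_zero, Matrix.cons_val_one,
          Matrix.head_cons]
      · exact hDA01
      · exact hDA11)
  have hcolR0 : fderiv ℝ (fun y => colE (Rmat (xb y v)) 0) x
      (EuclideanSpace.single 1 1) =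
      toE (fun k => ![DR00, DR10] k (EuclideanSpace.single 1 1)) :=
    st12_fderiv_toE_apply (fun k => by
      fin_cases k <;>
        simp only [Fin.zero_eta, Fin.mk_one, Matrix.cons_val_zero, Matrix.cons_val_one,
          Matrix.head_cons]
      · exact hDR00
      · exact hDR10)
  have hcolR1 : fderiv ℝ (fun y => colE (Rmat (xb y v)) 1) x
      (EuclideanSpace.single 0 1) =
      toE (fun k => ![DR01, DR11] k (EuclideanSpace.single 0 1)) :=
    st12_fderiv_toE_apply (fun k => by
      fin_cases k <;>
        simp only [Fin.zero_eta, Fin.mk_one, Matrix.cons_val_zero, Matrix.cons_val_one,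
          Matrix.head_cons]
      · exact hDR01
      · exact hDR11)
  constructor
  · -- part 1
    rw [he1, he0, hcolA0, hcolA1]
    refine congrArg toE (funext fun k => ?_)
    fin_cases k <;>
      simp only [Fin.zero_eta, Fin.mk_one, Matrix.cons_val_zero, Matrix.cons_val_one,
        Matrix.head_cons]
    · rw [vA00 1, vA01 0]
      simp only [cD, _root_.mul_inv_rev]
      norm_num [Fin.ext_iff]
      ring
    · rw [vA10 1, vA11 0]
      simp only [cD, _root_.mul_inv_rev]
      norm_num [Fin.ext_iff]
      ring
  · -- part 2
    intro w
    rw [he1, he0, hcolR0, hcolR1, hn]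
    have hdot : dot w (toE (fun k => ![DR00, DR10] k (EuclideanSpace.single 1 1)) -
        toE (fun k => ![DR01, DR11] k (EuclideanSpace.single 0 1))) =
        w 0 * (DR00 (EuclideanSpace.single 1 1) - DR01 (EuclideanSpace.single 0 1)) +
        w 1 * (DR10 (EuclideanSpace.single 1 1) - DR11 (EuclideanSpace.single 0 1)) := by
      simp [dot, toE, WithLp.equiv_symm_apply, PiLp.toLp_apply, PiLp.sub_apply]
    rw [hdot, vR00 1, vR01 0, vR10 1, vR11 0]
    have hU0 : cD v (xb x v) 0 0 0 0 0 (-2) 0 0 1 - cD v (xb x v) 0 0 0 0 0 0 (-2) 0 0 =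
        2 * xb x v 1 + (2 * xb x v 0 * xb x v 1 * v 0 - 2 * xb x v 0 * xb x v 0 * v 1) *
          (v 0 * xb x v 0 + v 1 * xb x v 1)⁻¹ := by
      simp only [cD, _root_.mul_inv_rev]
      norm_num [Fin.ext_iff]
      ring
    have hU1 : cD v (xb x v) 0 0 0 0 0 0 (-2) 0 1 - cD v (xb x v) 0 0 0 0 0 0 0 (-2) 0 =
        -2 * xb x v 0 + (2 * xb x v 1 * xb x v 1 * v 0 - 2 * xb x v 0 * xb x v 1 * v 1) *
          (v 0 * xb x v 0 + v 1 * xb x v 1)⁻¹ := by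
      simp only [cD, _root_.mul_inv_rev]
      norm_num [Fin.ext_iff]
      ring
    rw [hU0, hU1]
    set A := xb x v 0 with hA
    set B := xb x v 1 with hB
    set I := (v 0 * A + v 1 * B)⁻¹ with hI
    set U0 : ℝ := 2 * B + (2 * A * B * v 0 - 2 * A * A * v 1) * I with hU0d
    set U1 : ℝ := -2 * A + (2 * B * B * v 0 - 2 * A * B * v 1) * I with hU1d
    have hR0 : mulV (Rmat (xb x v)) v 0 = (1 - 2*(A*A)) * v 0 - 2*(A*B) * v 1 := by
      simp only [mulV, toE, Rmat, outer, WithLp.equiv_symm_apply, PiLp.toLp_apply, Matrix.sub_apply,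
        Matrix.smul_apply, Matrix.one_apply, Matrix.of_apply, smul_eq_mul, ← hA, ← hB]
      norm_num [Fin.ext_iff]
      try ring
      try tauto
    have hR1 : mulV (Rmat (xb x v)) v 1 = -2*(A*B) * v 0 + (1 - 2*(B*B)) * v 1 := by
      simp only [mulV, toE, Rmat, outer, WithLp.equiv_symm_apply, PiLp.toLp_apply, Matrix.sub_apply,
        Matrix.smul_apply, Matrix.one_apply, Matrix.of_apply, smul_eq_mul, ← hA, ← hB]
      norm_num [Fin.ext_iff]
      try ring
      try tauto
    set R0 : ℝ := (1 - 2*(A*A)) * v 0 - 2*(A*B) * v 1 with hR0d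
    set R1 : ℝ := -2*(A*B) * v 0 + (1 - 2*(B*B)) * v 1 with hR1d
    have hru : R0 * U0 + R1 * U1 = 0 := by
      rw [hR0d, hR1d, hU0d, hU1d, hI]
      linear_combination (-4*B*B*v 0*v 1*(v 0 * A + v 1 * B)⁻¹ + 4*A*B*v 1*v 1*(v 0 * A + v 1 * B)⁻¹
        - 4*A*B*v 0*v 0*(v 0 * A + v 1 * B)⁻¹ + 4*A*A*v 0*v 1*(v 0 * A + v 1 * B)⁻¹) * habsq
        + (-2*B*v 0 + 2*A*v 1) * hdinv
    have hupos : (0:ℝ) < U0 * U0 + U1 * U1 := by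
      have : U0 * U0 + U1 * U1 = 4 + (2*(B*v 0 - A*v 1)*I)^2 := by
        rw [hU0d, hU1d]
        linear_combination (4 + (2*(B*v 0 - A*v 1)*I)^2) * habsq
      rw [this]
      positivity
    have hrm : R0 * R0 + R1 * R1 = v 0 ^ 2 + v 1 ^ 2 := by
      rw [hR0d, hR1d]
      linear_combination (2*(v 0 * A + v 1 * B))^2 * habsq
    constructor
    · intro hw
      refine ⟨(w 0 * R0 + w 1 * R1) / (v 0 ^ 2 + v 1 ^ 2), ?_⟩
      have hdet0 : U0 * (w 0 * R1 - w 1 * R0) = 0 := by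
        linear_combination R1 * hw - w 1 * hru
      have hdet1 : U1 * (w 0 * R1 - w 1 * R0) = 0 := by
        linear_combination w 0 * hru - R0 * hw
      have hdet : w 0 * R1 - w 1 * R0 = 0 := by
        have hz : (w 0 * R1 - w 1 * R0) * (U0 * U0 + U1 * U1) = 0 := by
          linear_combination U0 * hdet0 + U1 * hdet1
        rcases mul_eq_zero.1 hz with h' | h'
        · exact h'
        · exact absurd h' hupos.ne'
      ext k
      fin_cases k <;>
        simp only [Fin.zero_eta, Fin.mk_one, PiLp.smul_apply, smul_eq_mul]
      · rw [hR0]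
        rw [div_mul_eq_mul_div, eq_div_iff hm.ne']
        linear_combination R1 * hdet - w 0 * hrm
      · rw [hR1]
        rw [div_mul_eq_mul_div, eq_div_iff hm.ne']
        linear_combination (-R0) * hdet - w 1 * hrm
    · rintro ⟨c, rfl⟩
      have h0 : (c • mulV (Rmat (xb x v)) v) 0 = c * R0 := by
        rw [PiLp.smul_apply, smul_eq_mul, hR0]
      have h1 : (c • mulV (Rmat (xb x v)) v) 1 = c * R1 := by
        rw [PiLp.smul_apply, smul_eq_mul, hR1]
      rw [h0, h1]
      linear_combination c * hru
end
end

section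
/- Let x lie in the open unit disk of ℝ² and v ∈ ℝ², v ≠ 0, and write x_b = x_b(x,v), t_b = t_b(x,v). Then the vectors x_b/(v·x_b) (which equals ∇_x t_b) and t_b·x_b/(v·x_b) (whose negative equals ∇_v t_b) satisfy the bounds |x_b/(v·x_b)| = 1/|v·x_b| and |t_b·x_b/(v·x_b)| ≤ 2/|v|². -/
noncomputable section

open Matrix Real Set

open RealInnerProductSpace

lemma dot_eq_inner' (a b : E) : dot a b = ⟪a, b⟫ := by
  simp [dot, PiLp.inner_apply, Fin.sum_univ_two, mul_comm]


/-- bounds for x_b/(v·x_b) and t_b·x_b/(v·x_b). -/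
theorem stmt16 (x v : E) (hx : ‖x‖ < 1) (hv : v ≠ 0) :
    ‖(dot v (xb x v))⁻¹ • xb x v‖ = 1 / |dot v (xb x v)| ∧
    ‖tb x v • ((dot v (xb x v))⁻¹ • xb x v)‖ ≤ 2 / ‖v‖ ^ 2 := by
  set S : Set ℝ := {s : ℝ | 0 ≤ s ∧ ‖x - s • v‖ ≤ 1} with hS
  have hvpos : 0 < ‖v‖ := norm_pos_iff.mpr hv
  have h0 : (0:ℝ) ∈ S := ⟨le_refl 0, by simp [hx.le]⟩
  have hbdd : BddAbove S := by
    refine ⟨(‖x‖ + 1)/‖v‖, fun s hs => ?_⟩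
    obtain ⟨hs0, hs1⟩ := hs
    rw [le_div_iff₀ hvpos]
    have h1 : ‖s • v‖ ≤ ‖x‖ + ‖x - s • v‖ := by
      calc ‖s • v‖ = ‖x - (x - s • v)‖ := by rw [sub_sub_cancel]
        _ ≤ ‖x‖ + ‖x - s • v‖ := norm_sub_le _ _
    rw [norm_smul, Real.norm_eq_abs, abs_of_nonneg hs0] at h1
    linarith
  have htmem : tb x v ∈ S := IsClosed.csSup_mem (by
      have : S = Ici (0:ℝ) ∩ (fun s : ℝ => ‖x - s • v‖) ⁻¹' Iic 1 := by
        ext s; simp [hS, Set.mem_setOf_eq]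
      rw [this]
      have hc : Continuous fun s : ℝ => ‖x - s • v‖ :=
        (continuous_const.sub (continuous_id.smul continuous_const)).norm
      exact isClosed_Ici.inter (isClosed_Iic.preimage hc)
    ) ⟨0, h0⟩ hbdd
  obtain ⟨ht0, hle⟩ := htmem
  set t := tb x v with htdef
  -- t > 0
  have htpos : 0 < t := by
    set s0 := (1 - ‖x‖)/‖v‖ with hs0def
    have hs0pos : 0 < s0 := div_pos (by linarith) hvpos
    have : s0 ∈ S := by
      refine ⟨hs0pos.le, ?_⟩
      calc ‖x - s0 • v‖ ≤ ‖x‖ + ‖s0 • v‖ := norm_sub_le _ _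
        _ = ‖x‖ + s0 * ‖v‖ := by rw [norm_smul, Real.norm_eq_abs, abs_of_nonneg hs0pos.le]
        _ = 1 := by rw [hs0def]; field_simp; ring
    exact lt_of_lt_of_le hs0pos (le_csSup hbdd this)
  -- ‖x - t v‖ = 1
  have heq : ‖x - t • v‖ = 1 := by
    rcases lt_or_eq_of_le hle with h | h
    · exfalso
      set ε := (1 - ‖x - t • v‖)/‖v‖ with hεdef
      have hεpos : 0 < ε := div_pos (by linarith) hvpos
      have : t + ε ∈ S := by
        refine ⟨by linarith, ?_⟩
        have : x - (t + ε) • v = (x - t • v) - ε • v := by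
          rw [add_smul]; abel
        rw [this]
        calc ‖x - t • v - ε • v‖ ≤ ‖x - t • v‖ + ‖ε • v‖ := norm_sub_le _ _
          _ = ‖x - t • v‖ + ε * ‖v‖ := by rw [norm_smul, Real.norm_eq_abs, abs_of_nonneg hεpos.le]
          _ = 1 := by rw [hεdef]; field_simp; ring
      have hsup : sSup S = t := rfl
      have := le_csSup hbdd this
      rw [hsup] at this
      linarith
    · exact h
  -- algebra
  set p := ⟪x, v⟫ with hpdef
  set V := ‖v‖^2 with hVdef
  have hVpos : 0 < V := by positivity
  have hexp : 1 = ‖x‖^2 - 2 * (t * p) + t^2 * V := by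
    have := norm_sub_sq_real x (t • v)
    rw [heq] at this
    simp only [real_inner_smul_right, norm_smul, Real.norm_eq_abs,
      abs_of_nonneg ht0, mul_pow] at this
    nlinarith [this]
  have hx2 : ‖x‖^2 < 1 := by nlinarith [norm_nonneg x]
  have hkey : 2 * p < t * V := by
    have h1 : t * (t * V - 2 * p) > 0 := by nlinarith
    nlinarith
  have hdotval : dot v (xb x v) = p - t * V := by
    rw [dot_eq_inner', xb, ← htdef, inner_sub_right, real_inner_smul_right,
      real_inner_self_eq_norm_sq, real_inner_comm, ← hpdef, ← hVdef]
  have hneg : dot v (xb x v) < 0 := by rw [hdotval]; nlinarith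
  have hxbnorm : ‖xb x v‖ = 1 := by rw [xb, ← htdef]; exact heq
  constructor
  · rw [norm_smul, hxbnorm, Real.norm_eq_abs, abs_inv, mul_one, one_div]
  · rw [norm_smul, norm_smul, hxbnorm, Real.norm_eq_abs, Real.norm_eq_abs,
      abs_inv, mul_one, abs_of_nonneg ht0, hdotval, abs_of_neg (hdotval ▸ hneg), neg_sub]
    have h2 : 0 < t * V - p := by nlinarith
    rw [← div_eq_mul_inv, div_le_div_iff₀ h2 hVpos]
    nlinarith
end
end
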